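/- Let F be a field of characteristic not 2 and T a subgroup of Fˣ of index 4 containing all nonzero squares. Suppose T + T ≠ T and −1 ∉ ΣT, where ΣT is the set of all nonzero finite sums of elements of T. Then ΣT is a subgroup of Fˣ of index 2 which properly contains T, is closed under addition (i.e. x + y ∈ ΣT ∪ {0} for x, y ∈ ΣT), and does not contain −1; that is, ΣT ∪ {0} is the positive cone of an ordering of F. -/

import Mathlib

/-- The subset of `F` corresponding to a subgroup of `Fˣ`. -/
def coeSet {F : Type*} [Field F] (T : Subgroup Fˣ) : Set F :=
  (fun u : Fˣ => (u : F)) '' (T : Set Fˣ)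

/-- `T + aT = { t₁ + a·t₂ : t₁, t₂ ∈ T ∪ {0}, t₁ + a·t₂ ≠ 0 }`. -/
def sumSet {F : Type*} [Field F] (T : Set F) (a : F) : Set F :=
  {x | x ≠ 0 ∧ ∃ t₁ ∈ T ∪ {(0 : F)}, ∃ t₂ ∈ T ∪ {(0 : F)}, x = t₁ + a * t₂}

/-- The coset `aT`. -/
def scaleSet {F : Type*} [Field F] (a : F) (T : Set F) : Set F :=
  {x | ∃ t ∈ T, x = a * t}

/-- `F` is `T`-rigid: `T + aT ⊆ T ∪ aT` whenever `a ∉ T ∪ (−T)`. -/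
def IsRigid {F : Type*} [Field F] (T : Set F) : Prop :=
  ∀ a : F, a ≠ 0 → a ∉ T → -a ∉ T → sumSet T a ⊆ T ∪ scaleSet a T

/-- The set of nonzero finite sums of elements of `T`. -/
def sigmaSet {F : Type*} [Field F] (T : Set F) : Set F :=
  {x | x ≠ 0 ∧ ∃ n : ℕ, ∃ f : Fin (n + 1) → F, (∀ i, f i ∈ T) ∧ ∑ i, f i = x}

section Aux

variable {F : Type*} [Field F] (T : Subgroup Fˣ)

lemma coeSet_ne_zero {x : F} (hx : x ∈ coeSet T) : x ≠ 0 := by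
  obtain ⟨u, -, rfl⟩ := hx; exact u.ne_zero

lemma coeSet_mul {x y : F} (hx : x ∈ coeSet T) (hy : y ∈ coeSet T) :
    x * y ∈ coeSet T := by
  obtain ⟨u, hu, rfl⟩ := hx; obtain ⟨v, hv, rfl⟩ := hy
  exact ⟨u * v, mul_mem hu hv, by simp⟩

lemma sigma_eq_closure :
    sigmaSet (coeSet T) = {x | x ≠ 0 ∧ x ∈ AddSubmonoid.closure (coeSet T)} := by
  ext x
  constructor
  · rintro ⟨hx, n, f, hf, rfl⟩
    exact ⟨hx, sum_mem fun i _ => AddSubmonoid.subset_closure (hf i)⟩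
  · rintro ⟨hx, hcl⟩
    obtain ⟨l, hl, rfl⟩ := AddSubmonoid.exists_list_of_mem_closure hcl
    have hne : l ≠ [] := by rintro rfl; simp at hx
    obtain ⟨k, hk⟩ : ∃ k, l.length = k + 1 :=
      Nat.exists_eq_succ_of_ne_zero (by simpa using hne)
    refine ⟨hx, k, fun i => l.get (Fin.cast hk.symm i), fun i => hl _ (l.get_mem _), ?_⟩
    have : ∑ i : Fin (k + 1), l.get ((finCongr hk.symm) i) = ∑ j : Fin l.length, l.get j :=
      Equiv.sum_comp _ _
    rw [show (fun i : Fin (k+1) => l.get (Fin.cast hk.symm i)) =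
      fun i => l.get ((finCongr hk.symm) i) from rfl, this]
    conv_rhs => rw [← List.ofFn_get l]
    rw [List.sum_ofFn]

open Pointwise in
lemma sigma_mul {x y : F} (hx : x ∈ sigmaSet (coeSet T)) (hy : y ∈ sigmaSet (coeSet T)) :
    x * y ∈ sigmaSet (coeSet T) := by
  rw [sigma_eq_closure] at *
  refine ⟨mul_ne_zero hx.1 hy.1, ?_⟩
  have h : x * y ∈ AddSubmonoid.closure (coeSet T) * AddSubmonoid.closure (coeSet T) :=
    AddSubmonoid.mul_mem_mul hx.2 hy.2
  rw [AddSubmonoid.closure_mul_closure] at h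
  refine AddSubmonoid.closure_mono ?_ h
  rintro z ⟨a, ha, b, hb, rfl⟩
  exact coeSet_mul T ha hb

lemma coeSet_subset_sigma : coeSet T ⊆ sigmaSet (coeSet T) := by
  intro x hx
  exact ⟨coeSet_ne_zero T hx, 0, fun _ => x, fun _ => hx, by simp⟩

lemma sigma_inv (hsq : ∀ u : Fˣ, u ^ 2 ∈ T) {x : F} (hx : x ∈ sigmaSet (coeSet T)) :
    x⁻¹ ∈ sigmaSet (coeSet T) := by
  have hx0 : x ≠ 0 := hx.1
  have hsqmem : (x⁻¹) ^ 2 ∈ coeSet T := by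
    refine ⟨(Units.mk0 x hx0)⁻¹ ^ 2, hsq _, ?_⟩
    simp [Units.val_pow_eq_pow_val]
  have := sigma_mul T hx (coeSet_subset_sigma T hsqmem)
  rwa [show x * (x⁻¹) ^ 2 = x⁻¹ by field_simp] at this

lemma sigma_add {x y : F} (hx : x ∈ sigmaSet (coeSet T)) (hy : y ∈ sigmaSet (coeSet T)) :
    x + y = 0 ∨ x + y ∈ sigmaSet (coeSet T) := by
  rw [sigma_eq_closure] at *
  rcases eq_or_ne (x + y) 0 with h | h
  · exact Or.inl h
  · exact Or.inr ⟨h, add_mem hx.2 hy.2⟩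

end Aux

/-- If T has index 4 in Fˣ, contains the nonzero squares, T + T ≠ T and −1 ∉ ΣT,
then ΣT ∪ {0} is the positive cone of an ordering of F: ΣT is a subgroup of index 2
properly containing T, additively closed, and not containing −1. -/
theorem sigma_is_ordering {F : Type*} [Field F] (hchar : (2 : F) ≠ 0)
    (T : Subgroup Fˣ) (hidx : T.index = 4) (hsq : ∀ u : Fˣ, u ^ 2 ∈ T)
    (hTT : sumSet (coeSet T) 1 ≠ coeSet T)
    (hneg : (-1 : F) ∉ sigmaSet (coeSet T)) :
    (∀ x ∈ sigmaSet (coeSet T), ∀ y ∈ sigmaSet (coeSet T), x * y ∈ sigmaSet (coeSet T)) ∧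
    (∀ x ∈ sigmaSet (coeSet T), x⁻¹ ∈ sigmaSet (coeSet T)) ∧
    coeSet T ⊆ sigmaSet (coeSet T) ∧ coeSet T ≠ sigmaSet (coeSet T) ∧
    (∀ x ∈ sigmaSet (coeSet T), ∀ y ∈ sigmaSet (coeSet T),
      x + y = 0 ∨ x + y ∈ sigmaSet (coeSet T)) ∧
    (∀ x : F, x ≠ 0 → x ∈ sigmaSet (coeSet T) ∨ -x ∈ sigmaSet (coeSet T)) ∧
    (∀ x : F, ¬(x ∈ sigmaSet (coeSet T) ∧ -x ∈ sigmaSet (coeSet T))) := by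
  -- The witness: an element of ΣT not in T
  have hsub : coeSet T ⊆ sumSet (coeSet T) 1 := by
    intro x hx
    exact ⟨coeSet_ne_zero T hx, x, Or.inl hx, 0, Or.inr rfl, by ring⟩
  obtain ⟨w, hwmem, hwT⟩ : ∃ w, w ∈ sumSet (coeSet T) 1 ∧ w ∉ coeSet T := by
    rw [← Set.not_subset]
    intro h
    exact hTT (Set.Subset.antisymm h hsub)
  have hwSig : w ∈ sigmaSet (coeSet T) := by
    obtain ⟨hw0, t₁, ht₁, t₂, ht₂, rfl⟩ := hwmem
    rw [one_mul] at *
    rcases ht₁ with ht₁ | ht₁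
    · rcases ht₂ with ht₂ | ht₂
      · refine ⟨hw0, 1, ![t₁, t₂], ?_, by simp [Fin.sum_univ_two]⟩
        intro i; fin_cases i <;> simpa
      · rw [Set.mem_singleton_iff] at ht₂; subst ht₂
        exact absurd (by simpa using ht₁) hwT
    · rw [Set.mem_singleton_iff] at ht₁; subst ht₁
      rcases ht₂ with ht₂ | ht₂
      · exact absurd (by simpa using ht₂) hwT
      · rw [Set.mem_singleton_iff] at ht₂; subst ht₂; simp at hw0
  -- The subgroup S of Fˣ corresponding to ΣT
  set S : Subgroup Fˣ :=
    { carrier := {u : Fˣ | (u : F) ∈ sigmaSet (coeSet T)}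
      mul_mem' := fun ha hb => by
        simpa using sigma_mul T ha hb
      one_mem' := by
        simpa using coeSet_subset_sigma T ⟨1, one_mem T, rfl⟩
      inv_mem' := fun {u} hu => by
        simpa using sigma_inv T hsq hu } with hS
  have hmemS : ∀ u : Fˣ, u ∈ S ↔ (u : F) ∈ sigmaSet (coeSet T) := fun u => Iff.rfl
  have hTS : T ≤ S := by
    intro u hu
    exact coeSet_subset_sigma T ⟨u, hu, rfl⟩
  have hneg1 : (-1 : Fˣ) ∉ S := by
    intro h
    rw [hmemS] at h
    simpa using hneg h
  -- S has index 2
  have hrel : T.relIndex S * S.index = 4 := by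
    rw [Subgroup.relIndex_mul_index hTS, hidx]
  have hSidx : S.index = 2 := by
    have hdvd : S.index ∣ 4 := ⟨T.relIndex S, by rw [mul_comm]; exact hrel.symm⟩
    have hle : S.index ≤ 4 := Nat.le_of_dvd (by norm_num) hdvd
    interval_cases h : S.index
    · omega
    · -- index 1 : S = ⊤, so -1 ∈ S, contradiction
      exact absurd (Subgroup.index_eq_one.mp h ▸ Subgroup.mem_top _ : (-1 : Fˣ) ∈ S) hneg1
    · rfl
    · omega
    · -- index 4 : relindex = 1, so S ≤ T, contradiction with w
      exfalso
      have hrel1 : T.relIndex S = 1 := by omega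
      have hST : S ≤ T := Subgroup.relIndex_eq_one.mp hrel1
      have : Units.mk0 w hwSig.1 ∈ S := by rw [hmemS]; exact hwSig
      exact hwT ⟨Units.mk0 w hwSig.1, hST this, rfl⟩
  refine ⟨fun x hx y hy => sigma_mul T hx hy, fun x hx => sigma_inv T hsq hx,
    coeSet_subset_sigma T, ?_, fun x hx y hy => sigma_add T hx hy, ?_, ?_⟩
  · intro h
    exact hwT (h ▸ hwSig)
  · -- totality
    intro x hx
    by_cases hxS : Units.mk0 x hx ∈ S
    · exact Or.inl (by rw [hmemS] at hxS; simpa using hxS)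
    · right
      have : (-1 : Fˣ) * Units.mk0 x hx ∈ S := by
        rw [Subgroup.mul_mem_iff_of_index_two hSidx]
        exact iff_of_false hneg1 hxS
      rw [hmemS] at this
      simpa using this
  · -- no x with both x and -x
    rintro x ⟨hx, hnx⟩
    have h1 := sigma_mul T (sigma_inv T hsq hx) hnx
    rw [show x⁻¹ * -x = -1 by field_simp [hx.1]] at h1
    exact hneg h1
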